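/- Let X_low be a real N_h×d matrix, X_safe a real N_s×d matrix, D a real N_h×m matrix, γ ≥ 0, λ > 0 real numbers, and r a natural number. Define J(Δ) = ‖X_low Δ − D‖_F² + γ‖X_safe Δ‖_F² + λ‖Δ‖_F², Q = X_lowᵀ X_low + γ X_safeᵀ X_safe + λ I, and M = Q⁻¹ X_lowᵀ D; let R be an invertible real d×d matrix with Rᵀ R = Q, and let σ_1 ≥ σ_2 ≥ … ≥ σ_{min(d,m)} ≥ 0 denote the singular values of the matrix R M. Then the minimum of J over {Δ ∈ ℝ^{d×m} : rank(Δ) ≤ r} equals ∑_{i > r} σ_i² + Tr(Dᵀ D) − Tr(Mᵀ Q M). -/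

import Mathlib

open Matrix

/-- The objective `J(Δ) = ‖Xlow Δ − D‖_F² + γ‖Xsafe Δ‖_F² + lam‖Δ‖_F²`,
where `‖A‖_F² = Tr(Aᵀ A)`. -/
noncomputable def J {Nh Ns d m : ℕ} (Xlow : Matrix (Fin Nh) (Fin d) ℝ)
    (Xsafe : Matrix (Fin Ns) (Fin d) ℝ) (D : Matrix (Fin Nh) (Fin m) ℝ)
    (γ lam : ℝ) (Δ : Matrix (Fin d) (Fin m) ℝ) : ℝ :=
  Matrix.trace ((Xlow * Δ - D)ᵀ * (Xlow * Δ - D))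
    + γ * Matrix.trace ((Xsafe * Δ)ᵀ * (Xsafe * Δ))
    + lam * Matrix.trace (Δᵀ * Δ)

/-- `Q = Xlowᵀ Xlow + γ Xsafeᵀ Xsafe + lam I`. -/
noncomputable def Qmat {Nh Ns d : ℕ} (Xlow : Matrix (Fin Nh) (Fin d) ℝ)
    (Xsafe : Matrix (Fin Ns) (Fin d) ℝ) (γ lam : ℝ) : Matrix (Fin d) (Fin d) ℝ :=
  Xlowᵀ * Xlow + γ • (Xsafeᵀ * Xsafe) + lam • (1 : Matrix (Fin d) (Fin d) ℝ)

/-- `M = Q⁻¹ Xlowᵀ D`. -/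
noncomputable def Mmat {Nh Ns d m : ℕ} (Xlow : Matrix (Fin Nh) (Fin d) ℝ)
    (Xsafe : Matrix (Fin Ns) (Fin d) ℝ) (D : Matrix (Fin Nh) (Fin m) ℝ)
    (γ lam : ℝ) : Matrix (Fin d) (Fin m) ℝ :=
  (Qmat Xlow Xsafe γ lam)⁻¹ * Xlowᵀ * D

section AuxLemmas
open Finset

lemma trace_tmul_self_nonneg {a b : ℕ} (X : Matrix (Fin a) (Fin b) ℝ) :
    0 ≤ Matrix.trace (Xᵀ * X) := by
  simp only [Matrix.trace, Matrix.diag, Matrix.mul_apply, Matrix.transpose_apply]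
  exact Finset.sum_nonneg fun j _ => Finset.sum_nonneg fun i _ => mul_self_nonneg _

lemma card_filter_lt_le {m r : ℕ} :
    (Finset.univ.filter (fun i : Fin m => (i : ℕ) < r)).card ≤ r := by
  classical
  have h : (Finset.univ.filter (fun i : Fin m => (i : ℕ) < r)).card
      ≤ (Finset.range r).card := by
    refine Finset.card_le_card_of_injOn (fun i => (i : ℕ)) ?_ ?_
    · intro i hi
      simp only [Finset.mem_coe, Finset.mem_filter] at hi
      simpa using hi.2
    · intro i _ j _ h
      exact Fin.ext h
  simpa using h

lemma card_filter_lt_eq {m r : ℕ} (h : r ≤ m) :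
    (Finset.univ.filter (fun i : Fin m => (i : ℕ) < r)).card = r := by
  classical
  have key : (Finset.univ.filter (fun i : Fin m => (i : ℕ) < r)).card
      = (Finset.range r).card := by
    refine Finset.card_bij' (fun i _ => (i : ℕ))
      (fun j hj => (⟨j, lt_of_lt_of_le (Finset.mem_range.mp hj) h⟩ : Fin m)) ?_ ?_ ?_ ?_
    · intro i hi
      simp only [Finset.mem_filter] at hi
      simpa using hi.2
    · intro j hj
      simp [Finset.mem_range.mp hj]
    · intro i _; rfl
    · intro j _; rfl
  simpa using key

lemma kyfan_scalar {m r : ℕ} (σ s : Fin m → ℝ) (hσ0 : ∀ i, 0 ≤ σ i)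
    (hmono : ∀ i j : Fin m, i ≤ j → σ j ≤ σ i)
    (hs0 : ∀ i, 0 ≤ s i) (hs1 : ∀ i, s i ≤ 1)
    (hsum : ∑ i, s i ≤ (r : ℝ)) :
    ∑ i, σ i ^ 2 * s i
      ≤ ∑ i ∈ Finset.univ.filter (fun i : Fin m => (i : ℕ) < r), σ i ^ 2 := by
  classical
  by_cases hrm : m ≤ r
  · have hfil : (Finset.univ.filter (fun i : Fin m => (i : ℕ) < r)) = Finset.univ := by
      apply Finset.filter_true_of_mem
      intro i _
      exact lt_of_lt_of_le i.isLt hrm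
    rw [hfil]
    apply Finset.sum_le_sum
    intro i _
    calc σ i ^ 2 * s i ≤ σ i ^ 2 * 1 := by
          apply mul_le_mul_of_nonneg_left (hs1 i) (sq_nonneg _)
      _ = σ i ^ 2 := mul_one _
  · push_neg at hrm
    set F := Finset.univ.filter (fun i : Fin m => (i : ℕ) < r) with hF
    have hcard : F.card = r := card_filter_lt_eq hrm.le
    set c : ℝ := σ ⟨r, hrm⟩ ^ 2 with hc
    have hc0 : 0 ≤ c := sq_nonneg _
    have hcle : ∀ i ∈ F, c ≤ σ i ^ 2 := by
      intro i hi
      simp only [hF, Finset.mem_filter] at hi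
      have : σ ⟨r, hrm⟩ ≤ σ i := hmono i ⟨r, hrm⟩ (Fin.le_def.mpr hi.2.le)
      exact pow_le_pow_left₀ (hσ0 ⟨r, hrm⟩) this 2
    have hgec : ∀ i ∈ Fᶜ, σ i ^ 2 ≤ c := by
      intro i hi
      simp only [hF, Finset.mem_compl, Finset.mem_filter, Finset.mem_univ, true_and,
        not_lt] at hi
      have : σ i ≤ σ ⟨r, hrm⟩ := hmono ⟨r, hrm⟩ i (Fin.le_def.mpr hi)
      exact pow_le_pow_left₀ (hσ0 i) this 2
    have split : ∑ i, σ i ^ 2 * s i = ∑ i ∈ F, σ i ^ 2 * s i + ∑ i ∈ Fᶜ, σ i ^ 2 * s i :=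
      (Finset.sum_add_sum_compl F _).symm
    have h1 : ∑ i ∈ Fᶜ, σ i ^ 2 * s i ≤ c * ∑ i ∈ Fᶜ, s i := by
      rw [Finset.mul_sum]
      apply Finset.sum_le_sum
      intro i hi
      exact mul_le_mul_of_nonneg_right (hgec i hi) (hs0 i)
    have h2 : ∑ i ∈ Fᶜ, s i ≤ (r : ℝ) - ∑ i ∈ F, s i := by
      have := Finset.sum_add_sum_compl F s
      linarith
    have h3 : c * ((r : ℝ) - ∑ i ∈ F, s i) = ∑ i ∈ F, c * (1 - s i) := by
      have hr : (r : ℝ) = ∑ _i ∈ F, (1 : ℝ) := by simp [hcard]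
      rw [hr, ← Finset.sum_sub_distrib, Finset.mul_sum]
    have h4 : ∑ i ∈ F, c * (1 - s i) ≤ ∑ i ∈ F, σ i ^ 2 * (1 - s i) := by
      apply Finset.sum_le_sum
      intro i hi
      apply mul_le_mul_of_nonneg_right (hcle i hi)
      linarith [hs1 i]
    have hcsum : c * ∑ i ∈ Fᶜ, s i ≤ c * ((r : ℝ) - ∑ i ∈ F, s i) :=
      mul_le_mul_of_nonneg_left h2 hc0
    have hfin : ∑ i ∈ F, σ i ^ 2 * s i + ∑ i ∈ F, σ i ^ 2 * (1 - s i) = ∑ i ∈ F, σ i ^ 2 := by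
      rw [← Finset.sum_add_distrib]
      congr 1
      ext i
      ring
    linarith

lemma exists_isometry {d m r : ℕ} (B : Matrix (Fin d) (Fin m) ℝ) (hB : B.rank ≤ r) :
    ∃ (k : ℕ) (V : Matrix (Fin m) (Fin k) ℝ), k ≤ r ∧ Vᵀ * V = 1 ∧ B * (V * Vᵀ) = B := by
  classical
  set W : Submodule ℝ (EuclideanSpace ℝ (Fin m)) :=
    Submodule.span ℝ (Set.range fun i => ((WithLp.linearEquiv 2 ℝ (Fin m → ℝ)).symm (B i))) with hW
  have hWmap : W = Submodule.map
      (((WithLp.linearEquiv 2 ℝ (Fin m → ℝ)).symm : (Fin m → ℝ) ≃ₗ[ℝ] EuclideanSpace ℝ (Fin m))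
        : (Fin m → ℝ) →ₗ[ℝ] EuclideanSpace ℝ (Fin m))
      (Submodule.span ℝ (Set.range B.row)) := by
    rw [Submodule.map_span, ← Set.range_comp]
    rfl
  have hfin : Module.finrank ℝ W ≤ r := by
    rw [hWmap, LinearEquiv.finrank_map_eq]
    rw [← Matrix.rank_eq_finrank_span_row]
    exact hB
  set k := Module.finrank ℝ W with hk
  let b : OrthonormalBasis (Fin k) ℝ W := stdOrthonormalBasis ℝ W
  set V : Matrix (Fin m) (Fin k) ℝ := fun i j => ((b j : EuclideanSpace ℝ (Fin m)) i) with hV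
  refine ⟨k, V, hfin, ?_, ?_⟩
  · ext j j'
    have horth := b.orthonormal
    rw [orthonormal_iff_ite] at horth
    have h1 : (inner ℝ (b j) (b j') : ℝ) = inner ℝ ((b j : EuclideanSpace ℝ (Fin m)))
        ((b j' : EuclideanSpace ℝ (Fin m))) := rfl
    have h2 : (inner ℝ ((b j : EuclideanSpace ℝ (Fin m)))
        ((b j' : EuclideanSpace ℝ (Fin m))) : ℝ)
        = ∑ i, (b j : EuclideanSpace ℝ (Fin m)) i * (b j' : EuclideanSpace ℝ (Fin m)) i := by
      rw [PiLp.inner_apply]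
      simp [RCLike.inner_apply]
      exact Finset.sum_congr rfl fun _ _ => mul_comm _ _
    rw [Matrix.mul_apply, Matrix.one_apply]
    simp only [Matrix.transpose_apply]; simp only [hV]
    rw [← h2, ← h1, horth j j']
  · ext i l
    have hmem : ((WithLp.linearEquiv 2 ℝ (Fin m → ℝ)).symm (B i)) ∈ W :=
      Submodule.subset_span ⟨i, rfl⟩
    set x : W := ⟨_, hmem⟩ with hx
    have hrepr := b.sum_repr' x
    have hco := congrArg (Subtype.val) hrepr
    have hcoeval := congrArg (fun v => v l) hco
    simp only [Submodule.coe_sum, Submodule.coe_smul] at hcoeval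
    have hxval : ∀ j, (x : EuclideanSpace ℝ (Fin m)) j = B i j := fun j => rfl
    have hinner : ∀ s, (inner ℝ (b s) x : ℝ)
        = ∑ j, (b s : EuclideanSpace ℝ (Fin m)) j * B i j := by
      intro s
      have h1 : (inner ℝ (b s) x : ℝ) = inner ℝ ((b s : EuclideanSpace ℝ (Fin m)))
          ((x : EuclideanSpace ℝ (Fin m))) := rfl
      rw [h1, PiLp.inner_apply]
      simp [RCLike.inner_apply, hxval]
      exact Finset.sum_congr rfl fun _ _ => mul_comm _ _
    rw [Matrix.mul_apply]
    have hsum : ∀ s, ((inner ℝ (b s) x : ℝ) • (b s : EuclideanSpace ℝ (Fin m))) l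
        = (inner ℝ (b s) x : ℝ) * (b s : EuclideanSpace ℝ (Fin m)) l := fun s => rfl
    have happ : (∑ s, (inner ℝ (b s) x : ℝ) • (b s : EuclideanSpace ℝ (Fin m))) l
        = ∑ s, ((inner ℝ (b s) x : ℝ) • (b s : EuclideanSpace ℝ (Fin m))) l :=
      by rw [WithLp.ofLp_sum]; exact Finset.sum_apply l Finset.univ _
    have goal2 : ∑ s, (inner ℝ (b s) x : ℝ) * (b s : EuclideanSpace ℝ (Fin m)) l = B i l := by
      have h5 := hcoeval
      rw [happ] at h5
      simpa only [hsum, hxval] using h5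
    calc ∑ j, B i j * (V * Vᵀ) j l
        = ∑ j, ∑ s, B i j * (V j s * V l s) := by
          apply Finset.sum_congr rfl
          intro j _
          rw [Matrix.mul_apply, Finset.mul_sum]
          simp [Matrix.transpose_apply]
      _ = ∑ s, ∑ j, B i j * (V j s * V l s) := Finset.sum_comm
      _ = ∑ s, (∑ j, (b s : EuclideanSpace ℝ (Fin m)) j * B i j)
            * (b s : EuclideanSpace ℝ (Fin m)) l := by
          apply Finset.sum_congr rfl
          intro s _
          rw [Finset.sum_mul]
          apply Finset.sum_congr rfl
          intro j _
          simp only [hV]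
          ring
      _ = B i l := by
          rw [← goal2]
          apply Finset.sum_congr rfl
          intro s _
          rw [hinner s]

section
variable {d m : ℕ} (A : Matrix (Fin d) (Fin m) ℝ) (hS : (Aᵀ * A).IsHermitian)

lemma star_eq_transpose_real {a : ℕ} (X : Matrix (Fin a) (Fin a) ℝ) : star X = Xᵀ := by
  ext i j
  simp [Matrix.star_apply]

lemma spec_real :
    Aᵀ * A = (hS.eigenvectorUnitary : Matrix (Fin m) (Fin m) ℝ)
      * diagonal hS.eigenvalues
      * (hS.eigenvectorUnitary : Matrix (Fin m) (Fin m) ℝ)ᵀ := by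
  have h1 : (RCLike.ofReal ∘ hS.eigenvalues : Fin m → ℝ) = hS.eigenvalues := by
    funext j; simp
  have h := hS.spectral_theorem
  rw [h1, Unitary.conjStarAlgAut_apply, star_eq_transpose_real] at h
  exact h

lemma U_t_mul : (hS.eigenvectorUnitary : Matrix (Fin m) (Fin m) ℝ)ᵀ
    * (hS.eigenvectorUnitary : Matrix (Fin m) (Fin m) ℝ) = 1 := by
  have h := Matrix.mem_unitaryGroup_iff'.mp (hS.eigenvectorUnitary).2
  rwa [star_eq_transpose_real] at h

lemma U_mul_t : (hS.eigenvectorUnitary : Matrix (Fin m) (Fin m) ℝ)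
    * (hS.eigenvectorUnitary : Matrix (Fin m) (Fin m) ℝ)ᵀ = 1 := by
  have h := Matrix.mem_unitaryGroup_iff.mp (hS.eigenvectorUnitary).2
  rwa [star_eq_transpose_real] at h

lemma exists_trunc (σ : Fin m → ℝ) (e : Equiv.Perm (Fin m))
    (he : ∀ i, σ i ^ 2 = hS.eigenvalues (e i)) (r : ℕ) :
    ∃ P : Matrix (Fin m) (Fin m) ℝ, P.rank ≤ r ∧
      Matrix.trace ((A * P - A)ᵀ * (A * P - A))
        = ∑ i ∈ Finset.univ.filter (fun i : Fin m => r ≤ (i : ℕ)), σ i ^ 2 := by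
  classical
  set U := (hS.eigenvectorUnitary : Matrix (Fin m) (Fin m) ℝ) with hU
  set w : Fin m → ℝ := fun j => if ((e.symm j : Fin m) : ℕ) < r then 1 else 0 with hw
  refine ⟨U * diagonal w * Uᵀ, ?_, ?_⟩
  · calc (U * diagonal w * Uᵀ).rank ≤ (U * diagonal w).rank := Matrix.rank_mul_le_left _ _
      _ ≤ (diagonal w).rank := Matrix.rank_mul_le_right _ _
      _ = Fintype.card {j // w j ≠ 0} := Matrix.rank_diagonal w
      _ = (Finset.univ.filter (fun j : Fin m => w j ≠ 0)).card := Fintype.card_subtype _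
      _ = (Finset.univ.filter (fun j : Fin m => ((e.symm j : Fin m) : ℕ) < r)).card := by
          congr 1
          apply Finset.filter_congr
          intro j _
          simp only [hw]
          by_cases h : ((e.symm j : Fin m) : ℕ) < r <;> simp [h]
      _ = (Finset.univ.filter (fun i : Fin m => (i : ℕ) < r)).card := by
          refine Finset.card_bij' (fun j _ => e.symm j) (fun i _ => e i) ?_ ?_ ?_ ?_
          · intro j hj
            simp only [Finset.mem_filter] at hj ⊢
            exact ⟨Finset.mem_univ _, hj.2⟩
          · intro i hi
            simp only [Finset.mem_filter, Equiv.symm_apply_apply] at hi ⊢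
            exact ⟨Finset.mem_univ _, hi.2⟩
          · intro j _; simp
          · intro i _; simp
      _ ≤ r := card_filter_lt_le
  · have hU2 : U * Uᵀ = 1 := U_mul_t A hS
    have hU1 : Uᵀ * U = 1 := U_t_mul A hS
    set D1 : Matrix (Fin m) (Fin m) ℝ := diagonal (fun j => w j - 1) with hD1
    have hPsub : A * (U * diagonal w * Uᵀ) - A = A * (U * D1 * Uᵀ) := by
      have h1 : U * D1 * Uᵀ = U * diagonal w * Uᵀ - 1 := by
        have hd : D1 = diagonal w - 1 := by
          rw [hD1, ← Matrix.diagonal_one, Matrix.diagonal_sub]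
        rw [hd, Matrix.mul_sub, Matrix.mul_one, Matrix.sub_mul, hU2]
      rw [h1, Matrix.mul_sub, Matrix.mul_one]
    rw [hPsub]
    have htr : (A * (U * D1 * Uᵀ))ᵀ * (A * (U * D1 * Uᵀ))
        = U * (D1 * diagonal hS.eigenvalues * D1) * Uᵀ := by
      have hcancel : ∀ X : Matrix (Fin m) (Fin m) ℝ, Uᵀ * (U * X) = X := by
        intro X; rw [← Matrix.mul_assoc, hU1, Matrix.one_mul]
      have hAA : Aᵀ * A = U * diagonal hS.eigenvalues * Uᵀ := spec_real A hS
      calc (A * (U * D1 * Uᵀ))ᵀ * (A * (U * D1 * Uᵀ))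
          = (U * D1 * Uᵀ)ᵀ * ((Aᵀ * A) * (U * D1 * Uᵀ)) := by
            simp only [Matrix.transpose_mul, Matrix.transpose_transpose,
              Matrix.diagonal_transpose, Matrix.mul_assoc]
        _ = (U * D1 * Uᵀ)ᵀ * ((U * diagonal hS.eigenvalues * Uᵀ) * (U * D1 * Uᵀ)) :=
            congrArg (fun Z => (U * D1 * Uᵀ)ᵀ * (Z * (U * D1 * Uᵀ))) hAA
        _ = U * (D1 * diagonal hS.eigenvalues * D1) * Uᵀ := by
            simp only [hD1, Matrix.transpose_mul, Matrix.transpose_transpose,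
              Matrix.diagonal_transpose, Matrix.mul_assoc]
            rw [hcancel, hcancel]
    rw [htr]
    have htrace : Matrix.trace (U * (D1 * diagonal hS.eigenvalues * D1) * Uᵀ)
        = Matrix.trace (D1 * diagonal hS.eigenvalues * D1) := by
      rw [Matrix.mul_assoc, Matrix.trace_mul_comm, Matrix.mul_assoc, hU1, Matrix.mul_one]
    rw [htrace, hD1, Matrix.diagonal_mul_diagonal, Matrix.diagonal_mul_diagonal,
      Matrix.trace_diagonal]
    have step : ∀ j, (w j - 1) * hS.eigenvalues j * (w j - 1)
        = if ((e.symm j : Fin m) : ℕ) < r then 0 else hS.eigenvalues j := by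
      intro j
      by_cases h : ((e.symm j : Fin m) : ℕ) < r <;> simp [hw, h] <;> ring
    rw [Finset.sum_congr rfl (fun j _ => step j)]
    rw [← Equiv.sum_comp e (fun j => if ((e.symm j : Fin m) : ℕ) < r then 0
      else hS.eigenvalues j)]
    simp only [Equiv.symm_apply_apply]
    rw [Finset.sum_filter]
    apply Finset.sum_congr rfl
    intro i _
    by_cases h : (i : ℕ) < r
    · rw [if_pos h, if_neg (by omega)]
    · rw [if_neg h, if_pos (by omega), he i]

end

section
variable {d m : ℕ}

lemma proj_trace_identity (X : Matrix (Fin d) (Fin m) ℝ) (P : Matrix (Fin m) (Fin m) ℝ)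
    (hPt : Pᵀ = P) (hPP : P * P = P) :
    Matrix.trace ((X - X * P)ᵀ * (X - X * P))
      = Matrix.trace (Xᵀ * X) - Matrix.trace (Xᵀ * X * P) := by
  have hexp : (X - X * P)ᵀ * (X - X * P)
      = (Xᵀ * X - Xᵀ * (X * P)) - ((Pᵀ * Xᵀ) * X - (Pᵀ * Xᵀ) * (X * P)) := by
    rw [Matrix.transpose_sub, Matrix.transpose_mul, Matrix.sub_mul, Matrix.mul_sub,
      Matrix.mul_sub]
  have tr1 : Matrix.trace (Xᵀ * (X * P)) = Matrix.trace (Xᵀ * X * P) := by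
    rw [Matrix.mul_assoc]
  have tr2 : Matrix.trace ((Pᵀ * Xᵀ) * X) = Matrix.trace (Xᵀ * X * P) := by
    rw [Matrix.mul_assoc, Matrix.trace_mul_comm, hPt]
  have tr3 : Matrix.trace ((Pᵀ * Xᵀ) * (X * P)) = Matrix.trace (Xᵀ * X * P) := by
    have e1 : (Pᵀ * Xᵀ) * (X * P) = Pᵀ * ((Xᵀ * X) * P) := by
      simp only [Matrix.mul_assoc]
    rw [e1, Matrix.trace_mul_comm, Matrix.mul_assoc, hPt, hPP]
  rw [hexp, Matrix.trace_sub, Matrix.trace_sub, Matrix.trace_sub, tr1, tr2, tr3]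
  ring

lemma lower_bound (A : Matrix (Fin d) (Fin m) ℝ) (hS : (Aᵀ * A).IsHermitian)
    (σ : Fin m → ℝ) (hσ0 : ∀ i, 0 ≤ σ i)
    (hmono : ∀ i j : Fin m, i ≤ j → σ j ≤ σ i)
    (e : Equiv.Perm (Fin m)) (he : ∀ i, σ i ^ 2 = hS.eigenvalues (e i))
    (r : ℕ) (B : Matrix (Fin d) (Fin m) ℝ) (hB : B.rank ≤ r) :
    (∑ i ∈ Finset.univ.filter (fun i : Fin m => r ≤ (i : ℕ)), σ i ^ 2)
      ≤ Matrix.trace ((B - A)ᵀ * (B - A)) := by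
  classical
  obtain ⟨k, V, hk, hV1, hBV⟩ := exists_isometry B hB
  set U := (hS.eigenvectorUnitary : Matrix (Fin m) (Fin m) ℝ) with hU
  have hU1 : Uᵀ * U = 1 := U_t_mul A hS
  have hU2 : U * Uᵀ = 1 := U_mul_t A hS
  set P : Matrix (Fin m) (Fin m) ℝ := V * Vᵀ with hP
  have hPt : Pᵀ = P := by
    rw [hP, Matrix.transpose_mul, Matrix.transpose_transpose]
  have hPP : P * P = P := by
    rw [hP, Matrix.mul_assoc, ← Matrix.mul_assoc Vᵀ V Vᵀ, hV1, Matrix.one_mul]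
  set X := B - A with hX
  have htP : Matrix.trace (Xᵀ * X * P) = Matrix.trace ((X * V)ᵀ * (X * V)) := by
    rw [hP, Matrix.transpose_mul, ← Matrix.mul_assoc (Xᵀ * X) V Vᵀ, Matrix.trace_mul_comm]
    simp only [Matrix.mul_assoc]
  have htPnn : 0 ≤ Matrix.trace (Xᵀ * X * P) := by
    rw [htP]; exact trace_tmul_self_nonneg _
  have hstep2 : X - X * P = -(A - A * P) := by
    rw [hX, Matrix.sub_mul, hBV]
    abel
  have hstep2' : Matrix.trace ((X - X * P)ᵀ * (X - X * P))
      = Matrix.trace ((A - A * P)ᵀ * (A - A * P)) := by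
    rw [hstep2, Matrix.transpose_neg, Matrix.neg_mul, Matrix.mul_neg, neg_neg]
  have hstep3 : Matrix.trace ((A - A * P)ᵀ * (A - A * P))
      = Matrix.trace (Aᵀ * A) - Matrix.trace (Aᵀ * A * P) :=
    proj_trace_identity A P hPt hPP
  have hcancel : ∀ Y : Matrix (Fin m) (Fin m) ℝ, Uᵀ * (U * Y) = Y := by
    intro Y; rw [← Matrix.mul_assoc, hU1, Matrix.one_mul]
  have hAA : Aᵀ * A = U * diagonal hS.eigenvalues * Uᵀ := spec_real A hS
  have htrAA : Matrix.trace (Aᵀ * A) = ∑ j, hS.eigenvalues j := by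
    have h := congrArg Matrix.trace hAA
    rw [h, Matrix.mul_assoc, Matrix.trace_mul_comm, Matrix.mul_assoc, hU1,
      Matrix.mul_one, Matrix.trace_diagonal]
  set W' : Matrix (Fin m) (Fin k) ℝ := Uᵀ * V with hW'
  set G : Matrix (Fin m) (Fin m) ℝ := W' * W'ᵀ with hG
  have hGt : Gᵀ = G := by rw [hG, Matrix.transpose_mul, Matrix.transpose_transpose]
  have hW'1 : W'ᵀ * W' = 1 := by
    rw [hW', Matrix.transpose_mul, Matrix.transpose_transpose, Matrix.mul_assoc,
      ← Matrix.mul_assoc U Uᵀ V, hU2, Matrix.one_mul, hV1]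
  have hGG : G * G = G := by
    rw [hG, Matrix.mul_assoc, ← Matrix.mul_assoc W'ᵀ W' W'ᵀ, hW'1, Matrix.one_mul]
  have hsym : ∀ s j, G s j = G j s := by
    intro s j
    have h := congrFun (congrFun hGt s) j
    rw [Matrix.transpose_apply] at h
    exact h.symm
  have ht0 : ∀ j, 0 ≤ G j j := by
    intro j
    rw [hG]
    simp only [Matrix.mul_apply, Matrix.transpose_apply]
    exact Finset.sum_nonneg fun s _ => mul_self_nonneg _
  have hsq : ∀ j, G j j = ∑ s, G j s ^ 2 := by
    intro j
    conv_lhs => rw [← hGG]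
    rw [Matrix.mul_apply]
    apply Finset.sum_congr rfl
    intro s _
    rw [hsym s j]
    ring
  have ht1 : ∀ j, G j j ≤ 1 := by
    intro j
    have h1 : G j j ^ 2 ≤ G j j := by
      calc G j j ^ 2 ≤ ∑ s, G j s ^ 2 :=
            Finset.single_le_sum (f := fun s => G j s ^ 2) (fun s _ => sq_nonneg _)
              (Finset.mem_univ j)
        _ = G j j := (hsq j).symm
    nlinarith [ht0 j]
  have htsum : ∑ j, G j j ≤ (r : ℝ) := by
    have h1 : ∑ j, G j j = Matrix.trace G := by
      simp [Matrix.trace, Matrix.diag]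
    have h2 : Matrix.trace G = (k : ℝ) := by
      rw [hG, Matrix.trace_mul_comm, hW'1, Matrix.trace_one]
      simp
    rw [h1, h2]
    exact_mod_cast hk
  have htrAAP : Matrix.trace (Aᵀ * A * P) = ∑ j, hS.eigenvalues j * G j j := by
    have h' := congrArg (fun Z : Matrix (Fin m) (Fin m) ℝ => Matrix.trace (Z * P)) hAA
    have h3 : Uᵀ * (P * U) = G := by
      rw [hP, hG, hW', Matrix.transpose_mul, Matrix.transpose_transpose]
      simp only [Matrix.mul_assoc]
    calc Matrix.trace (Aᵀ * A * P)
        = Matrix.trace ((U * diagonal hS.eigenvalues * Uᵀ) * P) := h'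
      _ = Matrix.trace (diagonal hS.eigenvalues * (Uᵀ * (P * U))) := by
          simp only [Matrix.mul_assoc]
          rw [Matrix.trace_mul_comm U]
          simp only [Matrix.mul_assoc]
      _ = Matrix.trace (diagonal hS.eigenvalues * G) := by rw [h3]
      _ = ∑ j, hS.eigenvalues j * G j j := by
          simp [Matrix.trace, Matrix.diag, Matrix.diagonal_mul]
  have hkf : ∑ j, hS.eigenvalues j * G j j
      ≤ ∑ i ∈ Finset.univ.filter (fun i : Fin m => (i : ℕ) < r), σ i ^ 2 := by
    have hre : ∑ j, hS.eigenvalues j * G j j = ∑ i, σ i ^ 2 * (G (e i) (e i)) := by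
      rw [← Equiv.sum_comp e (fun j => hS.eigenvalues j * G j j)]
      apply Finset.sum_congr rfl
      intro i _
      rw [he i]
    rw [hre]
    apply kyfan_scalar σ (fun i => G (e i) (e i)) hσ0 hmono (fun i => ht0 _) (fun i => ht1 _)
    rw [Equiv.sum_comp e (fun j => G j j)]
    exact htsum
  have htot : ∑ j, hS.eigenvalues j = ∑ i, σ i ^ 2 := by
    rw [← Equiv.sum_comp e hS.eigenvalues]
    exact (Finset.sum_congr rfl fun i _ => (he i).symm)
  have hsplit : ∑ i ∈ Finset.univ.filter (fun i : Fin m => (i : ℕ) < r), σ i ^ 2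
      + ∑ i ∈ Finset.univ.filter (fun i : Fin m => r ≤ (i : ℕ)), σ i ^ 2
      = ∑ i, σ i ^ 2 := by
    rw [← Finset.sum_filter_add_sum_filter_not Finset.univ (fun i : Fin m => (i : ℕ) < r)]
    congr 1
    apply Finset.sum_congr _ (fun _ _ => rfl)
    apply Finset.filter_congr
    intro i _
    simp [not_lt]
  have hmain : Matrix.trace ((B - A)ᵀ * (B - A))
      = Matrix.trace ((X - X * P)ᵀ * (X - X * P)) + Matrix.trace (Xᵀ * X * P) := by
    rw [proj_trace_identity X P hPt hPP, hX]
    ring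
  rw [hmain, hstep2', hstep3, htrAA, htrAAP]
  linarith
end

section
variable {d m : ℕ}

lemma sigma_tail_zero (A : Matrix (Fin d) (Fin m) ℝ) (hS : (Aᵀ * A).IsHermitian)
    (σ : Fin m → ℝ) (hσ0 : ∀ i, 0 ≤ σ i)
    (hmono : ∀ i j : Fin m, i ≤ j → σ j ≤ σ i)
    (e : Equiv.Perm (Fin m)) (he : ∀ i, σ i ^ 2 = hS.eigenvalues (e i)) :
    ∀ i : Fin m, (d : ℕ) ≤ (i : ℕ) → σ i = 0 := by
  intro i hi
  by_contra hne
  have hpos : 0 < σ i := lt_of_le_of_ne (hσ0 i) (Ne.symm hne)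
  have hcard : (Finset.Iic i).card
      ≤ (Finset.univ.filter (fun j : Fin m => hS.eigenvalues j ≠ 0)).card := by
    refine Finset.card_le_card_of_injOn (fun j => e j) ?_ ?_
    · intro j hj
      simp only [Finset.mem_coe, Finset.mem_filter, Finset.mem_univ, true_and]
      have hj' : j ≤ i := Finset.mem_Iic.mp hj
      have hσj : 0 < σ j := lt_of_lt_of_le hpos (hmono j i hj')
      have h2 : σ j ^ 2 ≠ 0 := by positivity
      rw [he j] at h2
      exact h2
    · intro a _ b _ hab
      exact e.injective hab
  have hIic : (Finset.Iic i).card = (i : ℕ) + 1 := Fin.card_Iic i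
  have hrank : (Finset.univ.filter (fun j : Fin m => hS.eigenvalues j ≠ 0)).card
      = (Aᵀ * A).rank := by
    rw [hS.rank_eq_card_non_zero_eigs, Fintype.card_subtype]
  have hrle : (Aᵀ * A).rank ≤ d :=
    le_trans (Matrix.rank_mul_le_left Aᵀ A) (by simpa using Matrix.rank_le_card_width Aᵀ)
  omega

lemma sum_filter_min_eq (σ : Fin m → ℝ) (r d : ℕ)
    (hzero : ∀ i : Fin m, (d : ℕ) ≤ (i : ℕ) → σ i = 0) :
    ∑ i ∈ Finset.univ.filter (fun i : Fin m => r ≤ (i : ℕ) ∧ (i : ℕ) < min d m), σ i ^ 2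
      = ∑ i ∈ Finset.univ.filter (fun i : Fin m => r ≤ (i : ℕ)), σ i ^ 2 := by
  apply Finset.sum_subset
  · intro i hi
    simp only [Finset.mem_filter] at hi ⊢
    exact ⟨hi.1, hi.2.1⟩
  · intro i hi hni
    simp only [Finset.mem_filter, Finset.mem_univ, true_and] at hi hni
    have hd : d ≤ (i : ℕ) := by
      have him : (i : ℕ) < m := i.isLt
      by_contra hlt
      push_neg at hlt
      exact hni ⟨hi, lt_min hlt him⟩
    rw [hzero i hd]
    ring
end

end AuxLemmas

/-- Let `σ₁ ≥ σ₂ ≥ … ≥ 0` be the singular values of `R M`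
(the nonnegative square roots of the eigenvalues of `(R M)ᵀ (R M)`, listed in
nonincreasing order).  Then the minimum of `J` over `{Δ : rank Δ ≤ r}` equals
`∑_{i > r} σ_i² + Tr(Dᵀ D) − Tr(Mᵀ Q M)`. -/
theorem stmt_8 {Nh Ns d m : ℕ}
    (Xlow : Matrix (Fin Nh) (Fin d) ℝ) (Xsafe : Matrix (Fin Ns) (Fin d) ℝ)
    (D : Matrix (Fin Nh) (Fin m) ℝ) (γ lam : ℝ) (hγ : 0 ≤ γ) (hlam : 0 < lam)
    (r : ℕ) (R : Matrix (Fin d) (Fin d) ℝ) (hR : IsUnit R)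
    (hRQ : Rᵀ * R = Qmat Xlow Xsafe γ lam)
    (hH : ((R * Mmat Xlow Xsafe D γ lam)ᵀ * (R * Mmat Xlow Xsafe D γ lam)).IsHermitian)
    (σ : Fin m → ℝ)
    (hσnonneg : ∀ i, 0 ≤ σ i)
    (hσmono : ∀ i j : Fin m, i ≤ j → σ j ≤ σ i)
    (hσeig : ∃ e : Equiv.Perm (Fin m), ∀ i, σ i ^ 2 = hH.eigenvalues (e i)) :
    IsLeast {x : ℝ | ∃ Δ : Matrix (Fin d) (Fin m) ℝ, Δ.rank ≤ r ∧ J Xlow Xsafe D γ lam Δ = x}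
      ((∑ i ∈ Finset.univ.filter (fun i : Fin m => r ≤ (i : ℕ) ∧ (i : ℕ) < min d m),
          σ i ^ 2)
        + Matrix.trace (Dᵀ * D)
        - Matrix.trace ((Mmat Xlow Xsafe D γ lam)ᵀ * Qmat Xlow Xsafe γ lam
            * Mmat Xlow Xsafe D γ lam)) := by
  classical
  obtain ⟨e, he⟩ := hσeig
  have hQt : Qmat Xlow Xsafe γ lam = Rᵀ * R := hRQ.symm
  have hRtu : IsUnit Rᵀ := by
    rw [Matrix.isUnit_iff_isUnit_det, Matrix.det_transpose]
    exact (Matrix.isUnit_iff_isUnit_det R).mp hR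
  have hQu : IsUnit (Qmat Xlow Xsafe γ lam) := by rw [hQt]; exact hRtu.mul hR
  have hQinv : Qmat Xlow Xsafe γ lam * (Qmat Xlow Xsafe γ lam)⁻¹ = 1 :=
    Matrix.mul_nonsing_inv _ ((Matrix.isUnit_iff_isUnit_det _).mp hQu)
  have hQM : Qmat Xlow Xsafe γ lam * Mmat Xlow Xsafe D γ lam = Xlowᵀ * D := by
    unfold Mmat
    rw [← Matrix.mul_assoc, ← Matrix.mul_assoc, hQinv, Matrix.one_mul]
  -- abbreviation
  set M : Matrix (Fin d) (Fin m) ℝ := Mmat Xlow Xsafe D γ lam with hM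
  -- key trace expansion of the quadratic form
  have key : ∀ Δ : Matrix (Fin d) (Fin m) ℝ,
      Matrix.trace ((R * Δ - R * M)ᵀ * (R * Δ - R * M))
        = Matrix.trace (Δᵀ * (Rᵀ * R) * Δ) - Matrix.trace (Δᵀ * (Rᵀ * R) * M)
          - Matrix.trace (Mᵀ * (Rᵀ * R) * Δ) + Matrix.trace (Mᵀ * (Rᵀ * R) * M) := by
    intro Δ
    have hexp : (R * Δ - R * M)ᵀ * (R * Δ - R * M)
        = (Δᵀ * (Rᵀ * R) * Δ - Δᵀ * (Rᵀ * R) * M)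
          - (Mᵀ * (Rᵀ * R) * Δ - Mᵀ * (Rᵀ * R) * M) := by
      simp only [Matrix.transpose_sub, Matrix.transpose_mul, Matrix.sub_mul,
        Matrix.mul_sub, Matrix.mul_assoc]
      abel
    rw [hexp, Matrix.trace_sub, Matrix.trace_sub, Matrix.trace_sub]
    ring
  have htr_symm : ∀ Δ : Matrix (Fin d) (Fin m) ℝ,
      Matrix.trace (Mᵀ * (Rᵀ * R) * Δ) = Matrix.trace (Δᵀ * (Rᵀ * R) * M) := by
    intro Δ
    rw [← Matrix.trace_transpose (Mᵀ * (Rᵀ * R) * Δ)]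
    congr 1
    simp only [Matrix.transpose_mul, Matrix.transpose_transpose, Matrix.mul_assoc]
  have hQMtr : ∀ Δ : Matrix (Fin d) (Fin m) ℝ,
      Matrix.trace (Δᵀ * (Rᵀ * R) * M) = Matrix.trace (Δᵀ * (Xlowᵀ * D)) := by
    intro Δ
    rw [Matrix.mul_assoc, ← hQt, hM, hQM]
  have hJ2 : ∀ Δ : Matrix (Fin d) (Fin m) ℝ,
      J Xlow Xsafe D γ lam Δ
        = Matrix.trace (Δᵀ * (Rᵀ * R) * Δ) - 2 * Matrix.trace (Δᵀ * (Xlowᵀ * D))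
          + Matrix.trace (Dᵀ * D) := by
    intro Δ
    have e1 : Matrix.trace ((Xlow * Δ - D)ᵀ * (Xlow * Δ - D))
        = Matrix.trace (Δᵀ * (Xlowᵀ * (Xlow * Δ))) - 2 * Matrix.trace (Δᵀ * (Xlowᵀ * D))
          + Matrix.trace (Dᵀ * D) := by
      have hexp2 : (Xlow * Δ - D)ᵀ * (Xlow * Δ - D)
          = (Δᵀ * (Xlowᵀ * (Xlow * Δ)) - Δᵀ * (Xlowᵀ * D))
            - (Dᵀ * (Xlow * Δ) - Dᵀ * D) := by
        simp only [Matrix.transpose_sub, Matrix.transpose_mul, Matrix.sub_mul,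
          Matrix.mul_sub, Matrix.mul_assoc]
        abel
      have e1b : Matrix.trace (Dᵀ * (Xlow * Δ)) = Matrix.trace (Δᵀ * (Xlowᵀ * D)) := by
        rw [← Matrix.trace_transpose (Dᵀ * (Xlow * Δ))]
        congr 1
        simp only [Matrix.transpose_mul, Matrix.transpose_transpose, Matrix.mul_assoc]
      rw [hexp2, Matrix.trace_sub, Matrix.trace_sub, Matrix.trace_sub, e1b]
      ring
    have e2 : Matrix.trace ((Xsafe * Δ)ᵀ * (Xsafe * Δ))
        = Matrix.trace (Δᵀ * (Xsafeᵀ * (Xsafe * Δ))) := by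
      congr 1
      simp only [Matrix.transpose_mul, Matrix.mul_assoc]
    have e3 : Matrix.trace (Δᵀ * (Rᵀ * R) * Δ)
        = Matrix.trace (Δᵀ * (Xlowᵀ * (Xlow * Δ)))
          + γ * Matrix.trace (Δᵀ * (Xsafeᵀ * (Xsafe * Δ))) + lam * Matrix.trace (Δᵀ * Δ) := by
      rw [← hQt]
      unfold Qmat
      have hq : Δᵀ * (Xlowᵀ * Xlow + γ • (Xsafeᵀ * Xsafe)
            + lam • (1 : Matrix (Fin d) (Fin d) ℝ)) * Δ
          = Δᵀ * (Xlowᵀ * (Xlow * Δ)) + γ • (Δᵀ * (Xsafeᵀ * (Xsafe * Δ)))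
            + lam • (Δᵀ * Δ) := by
        simp only [Matrix.mul_add, Matrix.add_mul, Matrix.mul_smul, Matrix.smul_mul,
          Matrix.one_mul, Matrix.mul_one, Matrix.mul_assoc]
      rw [hq, Matrix.trace_add, Matrix.trace_add, Matrix.trace_smul, Matrix.trace_smul,
        smul_eq_mul, smul_eq_mul]
    unfold _root_.J
    rw [e1, e2, e3]
    ring
  have hJall : ∀ Δ : Matrix (Fin d) (Fin m) ℝ,
      J Xlow Xsafe D γ lam Δ
        = Matrix.trace ((R * Δ - R * M)ᵀ * (R * Δ - R * M)) + Matrix.trace (Dᵀ * D)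
          - Matrix.trace (Mᵀ * Qmat Xlow Xsafe γ lam * M) := by
    intro Δ
    have k1 := key Δ
    have k3 := htr_symm Δ
    have k4 := hQMtr Δ
    have k5 : Matrix.trace (Mᵀ * (Rᵀ * R) * M)
        = Matrix.trace (Mᵀ * Qmat Xlow Xsafe γ lam * M) := by rw [hQt]
    have k2 := hJ2 Δ
    rw [k2]
    linarith
  have hzero : ∀ i : Fin m, (d : ℕ) ≤ (i : ℕ) → σ i = 0 :=
    sigma_tail_zero (R * M) hH σ hσnonneg hσmono e he
  have hsum := sum_filter_min_eq σ r d hzero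
  constructor
  · -- membership
    obtain ⟨P, hPr, hPval⟩ := exists_trunc (R * M) hH σ e he r
    refine ⟨M * P, le_trans (Matrix.rank_mul_le_right M P) hPr, ?_⟩
    rw [hJall (M * P), ← Matrix.mul_assoc R M P, hPval, hsum]
  · -- lower bound
    rintro x ⟨Δ, hΔr, rfl⟩
    rw [hJall Δ, hsum]
    have hBrank : (R * Δ).rank ≤ r := le_trans (Matrix.rank_mul_le_right R Δ) hΔr
    have hlb := lower_bound (R * M) hH σ hσnonneg hσmono e he r (R * Δ) hBrank
    linarith
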